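/- For every horizon T ≥ 1 and every sequence of request patterns (x_t)_{t=1}^T, the expected number of cache-configuration switches of the FTPL coded caching policy with learning rates η_t = α√t satisfies C(T) = E_γ[ ∑_{t=1}^{T−1} 1{ s_{t+1}(γ) ≠ s_t(γ) } ] ≤ (3·r_max·(|S|−1) / (2·√(2π)·α)) · ∑_{t=1}^T 1/√t. In particular, since r_max ≤ K, C(T) ≤ (3·K·(|S|−1) / (2·√(2π)·α)) · ∑_{t=1}^T 1/√t = O(√T). -/

import Mathlib

open MeasureTheory ProbabilityTheory

noncomputable section

namespace CodedCaching

/-- The finite set of feasible cache configurations: binary vectors (entries in `{0,1}`)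
with at least `M` ones. -/
def configs (N M : ℕ) : Finset (Fin N → ℕ) :=
  (Fintype.piFinset fun _ : Fin N => Finset.range 2).filter fun s => M ≤ ∑ i, s i

/-- The finite set of request patterns: `ℕ`-valued vectors whose entries sum to `K`. -/
def requests (N K : ℕ) : Finset (Fin N → ℕ) :=
  (Fintype.piFinset fun _ : Fin N => Finset.range (K + 1)).filter fun x => ∑ i, x i = K

/-- The truncated request vector `y = min(x, 1_N)`, viewed as a real vector. -/
def trunc {N : ℕ} (x : Fin N → ℕ) : Fin N → ℝ := fun i => (min (x i) 1 : ℕ)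

/-- The coded part of the expected transmission rate:
`(⟨s,1⟩/M − 1)·(1 − (1 − M/⟨s,1⟩)^⟨x,s⟩)`. -/
def codedRate {N : ℕ} (M : ℕ) (s x : Fin N → ℕ) : ℝ :=
  ((∑ i, (s i : ℝ)) / M - 1) *
    (1 - (1 - (M : ℝ) / ∑ i, (s i : ℝ)) ^ (∑ i, x i * s i))

/-- The expected transmission rate `K(s,x) = ⟨1_N − s, y⟩ + codedRate`. -/
def rate {N : ℕ} (M : ℕ) (s x : Fin N → ℕ) : ℝ :=
  (∑ i, (1 - (s i : ℝ)) * trunc x i) + codedRate M s x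

/-- The common component value of the vector `f(x,s)`:
`(1/M)·(1 − (1 − M/⟨s,1⟩)^⟨x,s⟩)`. -/
def fcomp {N : ℕ} (M : ℕ) (x s : Fin N → ℕ) : ℝ :=
  (1 / M) * (1 - (1 - (M : ℝ) / ∑ i, (s i : ℝ)) ^ (∑ i, x i * s i))

/-- `r_max`: the maximum of the rate over feasible configurations and request patterns. -/
def rmax (N K M : ℕ) : ℝ :=
  sSup {r : ℝ | ∃ s ∈ configs N M, ∃ x ∈ requests N K, r = rate M s x}

/-- `r_max^C`: the maximum of the coded rate over feasible configurations and requests. -/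
def rmaxC (N K M : ℕ) : ℝ :=
  sSup {r : ℝ | ∃ s ∈ configs N M, ∃ x ∈ requests N K, r = codedRate M s x}

/-- The standard Gaussian measure `N(0, I_N)` on `ℝ^N`. -/
def gauss (N : ℕ) : Measure (Fin N → ℝ) :=
  Measure.pi fun _ => gaussianReal 0 1

/-- The Gaussian width constant `G_max = E_γ[max_{s ∈ S} ⟨s, γ⟩]`. -/
def gmax (N M : ℕ) : ℝ :=
  ∫ γ, sSup {r : ℝ | ∃ s ∈ configs N M, r = ∑ i, (s i : ℝ) * γ i} ∂gauss N

/-- The FTPL objective at time `t` with learning rate `η` and perturbation `γ`: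
`⟨ s − (M/N)·1_N , ∑_{i=1}^{t−1} f(x_i, s) − Y_t + η·γ ⟩` where `Y_t = ∑_{i=1}^{t−1} y_i`. -/
def obj {N : ℕ} (M : ℕ) (x : ℕ → Fin N → ℕ) (η : ℝ) (t : ℕ)
    (γ : Fin N → ℝ) (s : Fin N → ℕ) : ℝ :=
  ∑ j, ((s j : ℝ) - (M : ℝ) / N) *
    ((∑ i ∈ Finset.Ico 1 t, fcomp M (x i) s)
      - (∑ i ∈ Finset.Ico 1 t, trunc (x i) j) + η * γ j)

/-- The FTPL policy: a measurable selection `σ t γ` of a minimizer of the perturbed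
cumulative cost over the feasible configurations, for learning-rate schedule `η`. -/
def IsFTPL {N : ℕ} (M : ℕ) (η : ℕ → ℝ) (x : ℕ → Fin N → ℕ)
    (σ : ℕ → (Fin N → ℝ) → Fin N → ℕ) : Prop :=
  (∀ t, Measurable (σ t)) ∧ (∀ t γ, σ t γ ∈ configs N M) ∧
    ∀ t γ, ∀ s ∈ configs N M, obj M x (η t) t γ (σ t γ) ≤ obj M x (η t) t γ s

/-- The regret of a (randomly perturbed) policy `σ` on the request sequence `x`
over horizon `T`, with respect to the best static configuration in hindsight. -/
def regret {N : ℕ} (M : ℕ) (x : ℕ → Fin N → ℕ)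
    (σ : ℕ → (Fin N → ℝ) → Fin N → ℕ) (T : ℕ) : ℝ :=
  (∑ t ∈ Finset.Icc 1 T, ∫ γ, rate M (σ t γ) (x t) ∂gauss N)
    - sInf {r : ℝ | ∃ s ∈ configs N M, r = ∑ t ∈ Finset.Icc 1 T, rate M s (x t)}

/-- The expected number of cache-configuration switches of the policy `σ` up to time `T`. -/
def switchCount {N : ℕ} (σ : ℕ → (Fin N → ℝ) → Fin N → ℕ) (T : ℕ) : ℝ :=
  ∫ γ, (∑ t ∈ Finset.Icc 1 (T - 1), if σ (t + 1) γ = σ t γ then (0 : ℝ) else 1) ∂gauss N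

/-! ### Auxiliary material for the proof -/

section Aux

open Real Set

/-- Linear part `⟨s, γ⟩` of the perturbed cost. -/
def lin {N : ℕ} (s : Fin N → ℕ) (γ : Fin N → ℝ) : ℝ := ∑ i, (s i : ℝ) * γ i

/-- `a` minimizes the perturbed cost `c · + ⟨·, γ⟩` over `S`. -/
def zmin {N : ℕ} (c : (Fin N → ℕ) → ℝ) (S : Finset (Fin N → ℕ)) (a : Fin N → ℕ)
    (γ : Fin N → ℝ) : Prop := ∀ p ∈ S, c a + lin a γ ≤ c p + lin p γ

/-- The event that the minimizers of two perturbed costs differ. -/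
def badSet {N : ℕ} (c c' : (Fin N → ℕ) → ℝ) (S : Finset (Fin N → ℕ)) : Set (Fin N → ℝ) :=
  {γ | ∃ a ∈ S, ∃ b ∈ S, zmin c S a γ ∧ zmin c' S b γ ∧ a ≠ b}

lemma gaussianPDF_le (x : ℝ) :
    gaussianPDF 0 1 x ≤ ENNReal.ofReal (Real.sqrt (2 * π))⁻¹ := by
  rw [gaussianPDF]
  refine ENNReal.ofReal_le_ofReal ?_
  rw [gaussianPDFReal]
  have h1 : Real.exp (-(x - 0) ^ 2 / (2 * (1:NNReal))) ≤ 1 := by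
    rw [Real.exp_le_one_iff]
    have : (0:ℝ) ≤ (x - 0)^2 := sq_nonneg _
    have h2 : (0:ℝ) < 2 * (1:NNReal) := by norm_num
    apply div_nonpos_of_nonpos_of_nonneg (by linarith) (le_of_lt h2)
  calc (Real.sqrt (2 * π * (1:NNReal)))⁻¹ * Real.exp (-(x - 0) ^ 2 / (2 * (1:NNReal)))
      ≤ (Real.sqrt (2 * π * (1:NNReal)))⁻¹ * 1 := by
        apply mul_le_mul_of_nonneg_left h1
        positivity
    _ = (Real.sqrt (2 * π))⁻¹ := by norm_num

lemma gaussianReal_Icc_le (a b : ℝ) :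
    gaussianReal 0 1 (Set.Icc a b) ≤ ENNReal.ofReal ((b - a) / Real.sqrt (2 * π)) := by
  rw [gaussianReal_apply 0 one_ne_zero]
  calc ∫⁻ x in Set.Icc a b, gaussianPDF 0 1 x
      ≤ ∫⁻ _ in Set.Icc a b, ENNReal.ofReal (Real.sqrt (2 * π))⁻¹ :=
        lintegral_mono fun x => gaussianPDF_le x
    _ = ENNReal.ofReal (Real.sqrt (2 * π))⁻¹ * volume (Set.Icc a b) := setLIntegral_const _ _
    _ = ENNReal.ofReal (Real.sqrt (2 * π))⁻¹ * ENNReal.ofReal (b - a) := by rw [Real.volume_Icc]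
    _ = ENNReal.ofReal ((Real.sqrt (2 * π))⁻¹ * (b - a)) := by
        rw [ENNReal.ofReal_mul (by positivity)]
    _ = ENNReal.ofReal ((b - a) / Real.sqrt (2 * π)) := by rw [div_eq_inv_mul]

end Aux
section Cross

open Real Set

variable {N : ℕ}

/-- `r` is a minimizer of both perturbed costs over `S`. -/
def coMin (c c' : (Fin N → ℕ) → ℝ) (S : Finset (Fin N → ℕ)) (r : Fin N → ℕ)
    (γ : Fin N → ℝ) : Prop :=
  ∀ p ∈ S, (c r + lin r γ ≤ c p + lin p γ) ∧ (c' r + lin r γ ≤ c' p + lin p γ)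

/-- The cross event: a unique common minimizer in each of the two groups, and
the leadership crosses between the groups. -/
def crossSet (c c' : (Fin N → ℕ) → ℝ) (S₀ S₁ : Finset (Fin N → ℕ)) : Set (Fin N → ℝ) :=
  {γ | ∃ r ∈ S₀, ∃ s ∈ S₁,
    (coMin c c' S₀ r γ ∧ ∀ p ∈ S₀, coMin c c' S₀ p γ → p = r) ∧
    (coMin c c' S₁ s γ ∧ ∀ p ∈ S₁, coMin c c' S₁ p γ → p = s) ∧
    ((c r + lin r γ ≤ c s + lin s γ ∧ c' s + lin s γ ≤ c' r + lin r γ) ∨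
     (c s + lin s γ ≤ c r + lin r γ ∧ c' r + lin r γ ≤ c' s + lin s γ))}

variable {n : ℕ}

/-- The off-coordinate part of the linear form. -/
def wOff (j : Fin (n+1)) (p : Fin (n+1) → ℕ) (δ : Fin n → ℝ) : ℝ :=
  ∑ k, (p (j.succAbove k) : ℝ) * δ k

def coMinOff (j : Fin (n+1)) (c c' : (Fin (n+1) → ℕ) → ℝ)
    (S : Finset (Fin (n+1) → ℕ)) (r : Fin (n+1) → ℕ) (δ : Fin n → ℝ) : Prop :=
  ∀ p ∈ S, (c r + wOff j r δ ≤ c p + wOff j p δ) ∧ (c' r + wOff j r δ ≤ c' p + wOff j p δ)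

def ASet (j : Fin (n+1)) (c c' : (Fin (n+1) → ℕ) → ℝ)
    (S₀ S₁ : Finset (Fin (n+1) → ℕ)) (r s : Fin (n+1) → ℕ) : Set (Fin n → ℝ) :=
  {δ | (coMinOff j c c' S₀ r δ ∧ ∀ p ∈ S₀, coMinOff j c c' S₀ p δ → p = r) ∧
       (coMinOff j c c' S₁ s δ ∧ ∀ p ∈ S₁, coMinOff j c c' S₁ p δ → p = s)}

def loF (j : Fin (n+1)) (c c' : (Fin (n+1) → ℕ) → ℝ) (r s : Fin (n+1) → ℕ)
    (δ : Fin n → ℝ) : ℝ :=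
  c r - c s + (wOff j r δ - wOff j s δ) + min ((c' r - c' s) - (c r - c s)) 0

def hiF (j : Fin (n+1)) (c c' : (Fin (n+1) → ℕ) → ℝ) (r s : Fin (n+1) → ℕ)
    (δ : Fin n → ℝ) : ℝ :=
  c r - c s + (wOff j r δ - wOff j s δ) + max ((c' r - c' s) - (c r - c s)) 0

def ESet (j : Fin (n+1)) (c c' : (Fin (n+1) → ℕ) → ℝ)
    (S₀ S₁ : Finset (Fin (n+1) → ℕ)) (r s : Fin (n+1) → ℕ) : Set (ℝ × (Fin n → ℝ)) :=
  {q | q.2 ∈ ASet j c c' S₀ S₁ r s ∧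
       q.1 ∈ Set.Icc (loF j c c' r s q.2) (hiF j c c' r s q.2)}

lemma measurable_wOff (j : Fin (n+1)) (p : Fin (n+1) → ℕ) : Measurable (wOff j p) := by
  apply Finset.measurable_sum
  intro k _
  exact (measurable_pi_apply k).const_mul _

lemma measurableSet_coMinOff (j : Fin (n+1)) (c c' : (Fin (n+1) → ℕ) → ℝ)
    (S : Finset (Fin (n+1) → ℕ)) (r : Fin (n+1) → ℕ) :
    MeasurableSet {δ : Fin n → ℝ | coMinOff j c c' S r δ} := by
  have h : {δ : Fin n → ℝ | coMinOff j c c' S r δ} =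
      ⋂ p ∈ (S : Set (Fin (n+1) → ℕ)),
        ({δ : Fin n → ℝ | c r + wOff j r δ ≤ c p + wOff j p δ} ∩
         {δ : Fin n → ℝ | c' r + wOff j r δ ≤ c' p + wOff j p δ}) := by
    ext δ; simp [coMinOff]
  rw [h]
  refine MeasurableSet.biInter S.countable_toSet fun p _ => MeasurableSet.inter ?_ ?_ <;>
    exact measurableSet_le (measurable_const.add (measurable_wOff j r))
      (measurable_const.add (measurable_wOff j p))

lemma measurableSet_uniq (j : Fin (n+1)) (c c' : (Fin (n+1) → ℕ) → ℝ)
    (S : Finset (Fin (n+1) → ℕ)) (r : Fin (n+1) → ℕ) :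
    MeasurableSet {δ : Fin n → ℝ | ∀ p ∈ S, coMinOff j c c' S p δ → p = r} := by
  have h : {δ : Fin n → ℝ | ∀ p ∈ S, coMinOff j c c' S p δ → p = r} =
      ⋂ p ∈ (S : Set (Fin (n+1) → ℕ)), {δ : Fin n → ℝ | coMinOff j c c' S p δ → p = r} := by
    ext δ; simp
  rw [h]
  refine MeasurableSet.biInter S.countable_toSet fun p _ => ?_
  by_cases hp : p = r
  · have : {δ : Fin n → ℝ | coMinOff j c c' S p δ → p = r} = Set.univ := by
      ext δ; simp [hp]
    rw [this]; exact MeasurableSet.univ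
  · have : {δ : Fin n → ℝ | coMinOff j c c' S p δ → p = r} =
        {δ : Fin n → ℝ | coMinOff j c c' S p δ}ᶜ := by
      ext δ; simp [hp]
    rw [this]; exact (measurableSet_coMinOff j c c' S p).compl

lemma measurableSet_ASet (j : Fin (n+1)) (c c' : (Fin (n+1) → ℕ) → ℝ)
    (S₀ S₁ : Finset (Fin (n+1) → ℕ)) (r s : Fin (n+1) → ℕ) :
    MeasurableSet (ASet j c c' S₀ S₁ r s) := by
  have h : ASet j c c' S₀ S₁ r s =
      ({δ : Fin n → ℝ | coMinOff j c c' S₀ r δ} ∩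
        {δ : Fin n → ℝ | ∀ p ∈ S₀, coMinOff j c c' S₀ p δ → p = r}) ∩
      ({δ : Fin n → ℝ | coMinOff j c c' S₁ s δ} ∩
        {δ : Fin n → ℝ | ∀ p ∈ S₁, coMinOff j c c' S₁ p δ → p = s}) := by
    ext δ; simp [ASet, Set.mem_setOf_eq, Set.mem_inter_iff]
  rw [h]
  exact ((measurableSet_coMinOff j c c' S₀ r).inter (measurableSet_uniq j c c' S₀ r)).inter
    ((measurableSet_coMinOff j c c' S₁ s).inter (measurableSet_uniq j c c' S₁ s))

lemma measurable_loF (j : Fin (n+1)) (c c' : (Fin (n+1) → ℕ) → ℝ) (r s : Fin (n+1) → ℕ) :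
    Measurable (loF j c c' r s) := by
  unfold loF
  exact ((measurable_const.add ((measurable_wOff j r).sub (measurable_wOff j s))).add_const _)

lemma measurable_hiF (j : Fin (n+1)) (c c' : (Fin (n+1) → ℕ) → ℝ) (r s : Fin (n+1) → ℕ) :
    Measurable (hiF j c c' r s) := by
  unfold hiF
  exact ((measurable_const.add ((measurable_wOff j r).sub (measurable_wOff j s))).add_const _)

lemma measurableSet_ESet (j : Fin (n+1)) (c c' : (Fin (n+1) → ℕ) → ℝ)
    (S₀ S₁ : Finset (Fin (n+1) → ℕ)) (r s : Fin (n+1) → ℕ) :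
    MeasurableSet (ESet j c c' S₀ S₁ r s) := by
  have h : ESet j c c' S₀ S₁ r s =
      (Prod.snd ⁻¹' ASet j c c' S₀ S₁ r s) ∩
      ({q : ℝ × (Fin n → ℝ) | loF j c c' r s q.2 ≤ q.1} ∩
       {q : ℝ × (Fin n → ℝ) | q.1 ≤ hiF j c c' r s q.2}) := by
    ext q
    simp only [ESet, Set.mem_setOf_eq, Set.mem_inter_iff, Set.mem_preimage, Set.mem_Icc]
  rw [h]
  refine (measurable_snd (measurableSet_ASet j c c' S₀ S₁ r s)).inter
    (MeasurableSet.inter ?_ ?_)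
  · exact measurableSet_le ((measurable_loF j c c' r s).comp measurable_snd) measurable_fst
  · exact measurableSet_le measurable_fst ((measurable_hiF j c c' r s).comp measurable_snd)

lemma coMin_iff (j : Fin (n+1)) (c c' : (Fin (n+1) → ℕ) → ℝ)
    (S : Finset (Fin (n+1) → ℕ)) (v : ℕ) (hS : ∀ p ∈ S, p j = v)
    (r : Fin (n+1) → ℕ) (hr : r ∈ S) (γ : Fin (n+1) → ℝ) :
    coMin c c' S r γ ↔ coMinOff j c c' S r (fun k => γ (j.succAbove k)) := by
  unfold coMin coMinOff
  refine forall₂_congr fun p hp => ?_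
  have h1 : lin r γ = (v : ℝ) * γ j + wOff j r (fun k => γ (j.succAbove k)) := by
    rw [lin, Fin.sum_univ_succAbove (fun i => (r i : ℝ) * γ i) j, hS r hr]; rfl
  have h2 : lin p γ = (v : ℝ) * γ j + wOff j p (fun k => γ (j.succAbove k)) := by
    rw [lin, Fin.sum_univ_succAbove (fun i => (p i : ℝ) * γ i) j, hS p hp]; rfl
  rw [h1, h2]
  constructor <;> (rintro ⟨ha, hb⟩; exact ⟨by linarith, by linarith⟩)

end Cross
section CrossMain

open Real Set

lemma gauss_prob (m : ℕ) : IsProbabilityMeasure (gauss m) := by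
  unfold gauss; infer_instance

lemma crossSet_measure_le {N : ℕ} (j : Fin N) (c c' : (Fin N → ℕ) → ℝ) (B : ℝ)
    (S₀ S₁ : Finset (Fin N → ℕ))
    (h₀ : ∀ s ∈ S₀, s j = 0) (h₁ : ∀ s ∈ S₁, s j = 1)
    (hpair : ∀ a ∈ S₀, ∀ b ∈ S₁, |(c' a - c a) - (c' b - c b)| ≤ B) :
    gauss N (crossSet c c' S₀ S₁) ≤ ENNReal.ofReal (B / Real.sqrt (2 * π)) := by
  have hN : 0 < N := j.pos
  obtain ⟨n, rfl⟩ : ∃ n, N = n + 1 := ⟨N - 1, by omega⟩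
  set e := MeasurableEquiv.piFinSuccAbove (fun _ : Fin (n+1) => ℝ) j with he_def
  have hmp : MeasurePreserving e (gauss (n+1))
      ((gaussianReal 0 1).prod (gauss n)) :=
    measurePreserving_piFinSuccAbove (fun _ => gaussianReal 0 1) j
  have he : ∀ γ : Fin (n+1) → ℝ, e γ = (γ j, fun k => γ (j.succAbove k)) := fun γ => rfl
  haveI : IsProbabilityMeasure (gauss n) := gauss_prob n
  -- the inclusion into the union of the transported events
  have hsub : crossSet c c' S₀ S₁ ⊆
      ⋃ r ∈ S₀, ⋃ s ∈ S₁, (⇑e) ⁻¹' (ESet j c c' S₀ S₁ r s) := by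
    rintro γ ⟨r, hr, s, hs, ⟨hcoR, huR⟩, ⟨hcoS, huS⟩, hdir⟩
    refine Set.mem_biUnion hr (Set.mem_biUnion hs ?_)
    rw [Set.mem_preimage, he γ]
    have hlinr : lin r γ = wOff j r (fun k => γ (j.succAbove k)) := by
      rw [lin, Fin.sum_univ_succAbove (fun i => (r i : ℝ) * γ i) j, h₀ r hr]
      simp; rfl
    have hlins : lin s γ = γ j + wOff j s (fun k => γ (j.succAbove k)) := by
      rw [lin, Fin.sum_univ_succAbove (fun i => (s i : ℝ) * γ i) j, h₁ s hs]
      simp; rfl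
    constructor
    · -- membership in ASet
      refine ⟨⟨(coMin_iff j c c' S₀ 0 h₀ r hr γ).mp hcoR, fun p hp hcop => ?_⟩,
        ⟨(coMin_iff j c c' S₁ 1 h₁ s hs γ).mp hcoS, fun p hp hcop => ?_⟩⟩
      · exact huR p hp ((coMin_iff j c c' S₀ 0 h₀ p hp γ).mpr hcop)
      · exact huS p hp ((coMin_iff j c c' S₁ 1 h₁ p hp γ).mpr hcop)
    · -- membership in the interval
      have hminle : min ((c' r - c' s) - (c r - c s)) 0 ≤ 0 := min_le_right _ _
      have hminle' : min ((c' r - c' s) - (c r - c s)) 0 ≤ (c' r - c' s) - (c r - c s) :=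
        min_le_left _ _
      have hmaxge : (c' r - c' s) - (c r - c s) ≤ max ((c' r - c' s) - (c r - c s)) 0 :=
        le_max_left _ _
      have hmaxge' : (0:ℝ) ≤ max ((c' r - c' s) - (c r - c s)) 0 := le_max_right _ _
      rcases hdir with ⟨hd1, hd2⟩ | ⟨hd1, hd2⟩ <;>
        (rw [hlinr, hlins] at hd1 hd2;
         exact ⟨by simp only [loF]; linarith, by simp only [hiF]; linarith⟩)
  -- the per-pair bound
  have hpp : ∀ r ∈ S₀, ∀ s ∈ S₁,
      ((gaussianReal 0 1).prod (gauss n)) (ESet j c c' S₀ S₁ r s) ≤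
        ENNReal.ofReal (B / Real.sqrt (2 * π)) * gauss n (ASet j c c' S₀ S₁ r s) := by
    intro r hr s hs
    rw [Measure.prod_apply_symm (measurableSet_ESet j c c' S₀ S₁ r s)]
    have hb : ∀ δ : Fin n → ℝ,
        (gaussianReal 0 1) ((fun g => (g, δ)) ⁻¹' ESet j c c' S₀ S₁ r s) ≤
        (ASet j c c' S₀ S₁ r s).indicator
          (fun _ => ENNReal.ofReal (B / Real.sqrt (2 * π))) δ := by
      intro δ
      by_cases hδ : δ ∈ ASet j c c' S₀ S₁ r s
      · have hsec : (fun g => (g, δ)) ⁻¹' ESet j c c' S₀ S₁ r s =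
            Set.Icc (loF j c c' r s δ) (hiF j c c' r s δ) := by
          ext g; simp [ESet, hδ]
        rw [hsec, Set.indicator_of_mem hδ]
        refine le_trans (gaussianReal_Icc_le _ _) (ENNReal.ofReal_le_ofReal ?_)
        have habs : hiF j c c' r s δ - loF j c c' r s δ =
            |(c' r - c r) - (c' s - c s)| := by
          have h1 : (c' r - c' s) - (c r - c s) = (c' r - c r) - (c' s - c s) := by ring
          rw [hiF, loF, ← h1]
          have := max_sub_min_eq_abs ((c' r - c' s) - (c r - c s)) 0
          rw [abs_sub_comm] at this
          calc _ = max ((c' r - c' s) - (c r - c s)) 0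
              - min ((c' r - c' s) - (c r - c s)) 0 := by ring
            _ = _ := by rw [this]; rw [sub_zero]
        have hd : hiF j c c' r s δ - loF j c c' r s δ ≤ B := by
          rw [habs]; exact hpair r hr s hs
        have hsqrt : (0:ℝ) < Real.sqrt (2 * π) := by positivity
        gcongr

      · have hsec : (fun g => (g, δ)) ⁻¹' ESet j c c' S₀ S₁ r s = (∅ : Set ℝ) := by
          ext g; simp [ESet, hδ]
        rw [hsec, Set.indicator_of_notMem hδ]
        simp
    calc ∫⁻ δ, (gaussianReal 0 1) ((fun g => (g, δ)) ⁻¹' ESet j c c' S₀ S₁ r s) ∂gauss n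
        ≤ ∫⁻ δ, (ASet j c c' S₀ S₁ r s).indicator
            (fun _ => ENNReal.ofReal (B / Real.sqrt (2 * π))) δ ∂gauss n :=
          lintegral_mono hb
      _ = ENNReal.ofReal (B / Real.sqrt (2 * π)) * gauss n (ASet j c c' S₀ S₁ r s) :=
          lintegral_indicator_const (measurableSet_ASet j c c' S₀ S₁ r s) _
  -- disjointness of the A-sets
  have hdisj : ∑ r ∈ S₀, ∑ s ∈ S₁, gauss n (ASet j c c' S₀ S₁ r s) ≤ 1 := by
    rw [← Finset.sum_product']
    have := MeasureTheory.sum_measure_le_measure_univ (μ := gauss n)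
      (s := S₀ ×ˢ S₁) (t := fun p => ASet j c c' S₀ S₁ p.1 p.2)
      (fun p _ => (measurableSet_ASet j c c' S₀ S₁ p.1 p.2).nullMeasurableSet) ?_
    · simpa using this
    · intro p hp q hq hpq
      apply Disjoint.aedisjoint
      rw [Set.disjoint_left]
      rintro δ ⟨⟨hcoP1, huP1⟩, hcoP2, huP2⟩ ⟨⟨hcoQ1, huQ1⟩, hcoQ2, huQ2⟩
      rw [Finset.mem_coe, Finset.mem_product] at hp hq
      exact hpq (Prod.ext (huQ1 p.1 hp.1 hcoP1) (huQ2 p.2 hp.2 hcoP2))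
  calc gauss (n+1) (crossSet c c' S₀ S₁)
      ≤ gauss (n+1) (⋃ r ∈ S₀, ⋃ s ∈ S₁, (⇑e) ⁻¹' ESet j c c' S₀ S₁ r s) :=
        measure_mono hsub
    _ ≤ ∑ r ∈ S₀, gauss (n+1) (⋃ s ∈ S₁, (⇑e) ⁻¹' ESet j c c' S₀ S₁ r s) :=
        measure_biUnion_finset_le _ _
    _ ≤ ∑ r ∈ S₀, ∑ s ∈ S₁, gauss (n+1) ((⇑e) ⁻¹' ESet j c c' S₀ S₁ r s) :=
        Finset.sum_le_sum fun r _ => measure_biUnion_finset_le _ _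
    _ = ∑ r ∈ S₀, ∑ s ∈ S₁, ((gaussianReal 0 1).prod (gauss n)) (ESet j c c' S₀ S₁ r s) := by
        refine Finset.sum_congr rfl fun r _ => Finset.sum_congr rfl fun s _ => ?_
        exact hmp.measure_preimage (measurableSet_ESet j c c' S₀ S₁ r s).nullMeasurableSet
    _ ≤ ∑ r ∈ S₀, ∑ s ∈ S₁,
          ENNReal.ofReal (B / Real.sqrt (2*π)) * gauss n (ASet j c c' S₀ S₁ r s) :=
        Finset.sum_le_sum fun r hr => Finset.sum_le_sum fun s hs => hpp r hr s hs
    _ = ENNReal.ofReal (B / Real.sqrt (2*π)) *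
          ∑ r ∈ S₀, ∑ s ∈ S₁, gauss n (ASet j c c' S₀ S₁ r s) := by
        simp_rw [Finset.mul_sum]
    _ ≤ ENNReal.ofReal (B / Real.sqrt (2*π)) * 1 := mul_le_mul_right hdisj _
    _ = ENNReal.ofReal (B / Real.sqrt (2*π)) := mul_one _

end CrossMain
section BadMain

open Real Set

lemma uniq_of_not_bad {N : ℕ} (c c' : (Fin N → ℕ) → ℝ) (T : Finset (Fin N → ℕ))
    (γ : Fin N → ℝ) (u : Fin N → ℕ) (hu : u ∈ T)
    (hmin : zmin c T u γ) (hnb : γ ∉ badSet c c' T) :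
    coMin c c' T u γ ∧ ∀ p ∈ T, coMin c c' T p γ → p = u := by
  obtain ⟨q, hq, hqmin⟩ := T.exists_min_image (fun p => c' p + lin p γ) ⟨u, hu⟩
  have hqu : q = u := by
    by_contra hne
    exact hnb ⟨u, hu, q, hq, hmin, fun p hp => hqmin p hp, fun h => hne h.symm⟩
  have hc' : zmin c' T u γ := by
    intro p hp; rw [← hqu]; exact hqmin p hp
  refine ⟨fun p hp => ⟨hmin p hp, hc' p hp⟩, fun p hp hcop => ?_⟩
  by_contra hne
  exact hnb ⟨u, hu, p, hp, hmin, fun q' hq' => (hcop q' hq').2, fun h => hne h.symm⟩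

lemma uniq_of_not_bad' {N : ℕ} (c c' : (Fin N → ℕ) → ℝ) (T : Finset (Fin N → ℕ))
    (γ : Fin N → ℝ) (u : Fin N → ℕ) (hu : u ∈ T)
    (hmin : zmin c' T u γ) (hnb : γ ∉ badSet c c' T) :
    coMin c c' T u γ ∧ ∀ p ∈ T, coMin c c' T p γ → p = u := by
  obtain ⟨q, hq, hqmin⟩ := T.exists_min_image (fun p => c p + lin p γ) ⟨u, hu⟩
  have hqu : q = u := by
    by_contra hne
    exact hnb ⟨q, hq, u, hu, fun p hp => hqmin p hp, hmin, hne⟩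
  have hc : zmin c T u γ := by
    intro p hp; rw [← hqu]; exact hqmin p hp
  refine ⟨fun p hp => ⟨hc p hp, hmin p hp⟩, fun p hp hcop => ?_⟩
  by_contra hne
  exact hnb ⟨p, hp, u, hu, fun q' hq' => (hcop q' hq').1, hmin, hne⟩

lemma badSet_split {N : ℕ} (c c' : (Fin N → ℕ) → ℝ) (S : Finset (Fin N → ℕ)) (j : Fin N) :
    badSet c c' S ⊆
      (badSet c c' (S.filter (fun s => s j = 0)) ∪
       badSet c c' (S.filter (fun s => s j ≠ 0))) ∪
      crossSet c c' (S.filter (fun s => s j = 0)) (S.filter (fun s => s j ≠ 0)) := by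
  intro γ hγ
  obtain ⟨a, ha, b, hb, hza, hzb, hab⟩ := hγ
  set S₀ := S.filter (fun s => s j = 0) with hS₀
  set S₁ := S.filter (fun s => s j ≠ 0) with hS₁
  by_cases h0 : γ ∈ badSet c c' S₀
  · exact Or.inl (Or.inl h0)
  by_cases h1 : γ ∈ badSet c c' S₁
  · exact Or.inl (Or.inr h1)
  right
  have hS₀sub : S₀ ⊆ S := S.filter_subset _
  have hS₁sub : S₁ ⊆ S := S.filter_subset _
  have hza' : ∀ T : Finset (Fin N → ℕ), T ⊆ S → zmin c T a γ :=
    fun T hT p hp => hza p (hT hp)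
  have hzb' : ∀ T : Finset (Fin N → ℕ), T ⊆ S → zmin c' T b γ :=
    fun T hT p hp => hzb p (hT hp)
  by_cases haj : a j = 0 <;> by_cases hbj : b j = 0
  · -- both in S₀ : contradiction with h0
    exact absurd ⟨a, Finset.mem_filter.mpr ⟨ha, haj⟩, b, Finset.mem_filter.mpr ⟨hb, hbj⟩,
      hza' S₀ hS₀sub, hzb' S₀ hS₀sub, hab⟩ h0
  · -- a ∈ S₀, b ∈ S₁ : forward crossing
    have ha0 : a ∈ S₀ := Finset.mem_filter.mpr ⟨ha, haj⟩
    have hb1 : b ∈ S₁ := Finset.mem_filter.mpr ⟨hb, hbj⟩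
    obtain ⟨hco0, hu0⟩ := uniq_of_not_bad c c' S₀ γ a ha0 (hza' S₀ hS₀sub) h0
    obtain ⟨hco1, hu1⟩ := uniq_of_not_bad' c c' S₁ γ b hb1 (hzb' S₁ hS₁sub) h1
    exact ⟨a, ha0, b, hb1, ⟨hco0, hu0⟩, ⟨hco1, hu1⟩,
      Or.inl ⟨hza b hb, hzb a ha⟩⟩
  · -- a ∈ S₁, b ∈ S₀ : backward crossing
    have ha1 : a ∈ S₁ := Finset.mem_filter.mpr ⟨ha, haj⟩
    have hb0 : b ∈ S₀ := Finset.mem_filter.mpr ⟨hb, hbj⟩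
    obtain ⟨hco0, hu0⟩ := uniq_of_not_bad' c c' S₀ γ b hb0 (hzb' S₀ hS₀sub) h0
    obtain ⟨hco1, hu1⟩ := uniq_of_not_bad c c' S₁ γ a ha1 (hza' S₁ hS₁sub) h1
    exact ⟨b, hb0, a, ha1, ⟨hco0, hu0⟩, ⟨hco1, hu1⟩,
      Or.inr ⟨hza b hb, hzb a ha⟩⟩
  · -- both in S₁ : contradiction with h1
    exact absurd ⟨a, Finset.mem_filter.mpr ⟨ha, haj⟩, b, Finset.mem_filter.mpr ⟨hb, hbj⟩,
      hza' S₁ hS₁sub, hzb' S₁ hS₁sub, hab⟩ h1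

lemma badSet_measure_le {N : ℕ} (c c' : (Fin N → ℕ) → ℝ) (B : ℝ) :
    ∀ (k : ℕ) (S : Finset (Fin N → ℕ)), S.card ≤ k →
    (∀ s ∈ S, ∀ i, s i ≤ 1) →
    (∀ a ∈ S, ∀ b ∈ S, |(c' a - c a) - (c' b - c b)| ≤ B) →
    gauss N (badSet c c' S) ≤
      ENNReal.ofReal (((S.card : ℝ) - 1) * (B / Real.sqrt (2 * π))) := by
  intro k
  induction k with
  | zero =>
    intro S hcard _ _
    have : S = ∅ := Finset.card_eq_zero.mp (Nat.le_zero.mp hcard)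
    subst this
    have : badSet c c' (∅ : Finset (Fin N → ℕ)) = ∅ := by
      ext γ; simp [badSet]
    rw [this]
    simp
  | succ k ih =>
    intro S hcard hbin hpair
    by_cases hS1 : S.card ≤ 1
    · have : badSet c c' S = ∅ := by
        ext γ
        simp only [badSet, Set.mem_setOf_eq, Set.mem_empty_iff_false, iff_false, not_exists]
        rintro a ⟨ha, b, hb, _, _, hab⟩
        exact hab (Finset.card_le_one.mp hS1 a ha b hb)
      rw [this]
      simp
    · push_neg at hS1
      obtain ⟨a, ha, b, hb, hab⟩ := Finset.one_lt_card.mp hS1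
      obtain ⟨j, hj⟩ := Function.ne_iff.mp hab
      set S₀ := S.filter (fun s => s j = 0) with hS₀def
      set S₁ := S.filter (fun s => s j ≠ 0) with hS₁def
      have hsplit : S₀.card + S₁.card = S.card := by
        rw [hS₀def, hS₁def]
        exact Finset.card_filter_add_card_filter_not _
      have hj0 : ∀ s ∈ S₁, s j = 1 := by
        intro s hs
        have h1 := (Finset.mem_filter.mp hs).2
        have h2 := hbin s (Finset.mem_filter.mp hs).1 j
        omega
      have hne0 : 0 < S₀.card ∧ 0 < S₁.card := by
        constructor <;> rw [Finset.card_pos]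
        · rcases Nat.eq_zero_or_pos (a j) with h | h
          · exact ⟨a, Finset.mem_filter.mpr ⟨ha, h⟩⟩
          · refine ⟨b, Finset.mem_filter.mpr ⟨hb, ?_⟩⟩
            have := hbin a ha j; have := hbin b hb j; omega
        · rcases Nat.eq_zero_or_pos (a j) with h | h
          · refine ⟨b, Finset.mem_filter.mpr ⟨hb, ?_⟩⟩
            omega
          · exact ⟨a, Finset.mem_filter.mpr ⟨ha, by omega⟩⟩
      have hB : 0 ≤ B := le_trans (abs_nonneg _) (hpair a ha a ha)
      have hBq : 0 ≤ B / Real.sqrt (2 * π) := by positivity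
      have hbin₀ : ∀ s ∈ S₀, ∀ i, s i ≤ 1 := fun s hs => hbin s (S.filter_subset _ hs)
      have hbin₁ : ∀ s ∈ S₁, ∀ i, s i ≤ 1 := fun s hs => hbin s (S.filter_subset _ hs)
      have hpair₀ : ∀ a' ∈ S₀, ∀ b' ∈ S₀, |(c' a' - c a') - (c' b' - c b')| ≤ B :=
        fun a' ha' b' hb' => hpair a' (S.filter_subset _ ha') b' (S.filter_subset _ hb')
      have hpair₁ : ∀ a' ∈ S₁, ∀ b' ∈ S₁, |(c' a' - c a') - (c' b' - c b')| ≤ B :=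
        fun a' ha' b' hb' => hpair a' (S.filter_subset _ ha') b' (S.filter_subset _ hb')
      have hcard₀ : S₀.card ≤ k := by omega
      have hcard₁ : S₁.card ≤ k := by omega
      have hcross : gauss N (crossSet c c' S₀ S₁) ≤
          ENNReal.ofReal (B / Real.sqrt (2 * π)) := by
        refine crossSet_measure_le j c c' B S₀ S₁ ?_ hj0 ?_
        · exact fun s hs => (Finset.mem_filter.mp hs).2
        · exact fun a' ha' b' hb' =>
            hpair a' (S.filter_subset _ ha') b' (S.filter_subset _ hb')
      calc gauss N (badSet c c' S)
          ≤ gauss N ((badSet c c' S₀ ∪ badSet c c' S₁) ∪ crossSet c c' S₀ S₁) :=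
            measure_mono (badSet_split c c' S j)
        _ ≤ gauss N (badSet c c' S₀ ∪ badSet c c' S₁) + gauss N (crossSet c c' S₀ S₁) :=
            measure_union_le _ _
        _ ≤ (gauss N (badSet c c' S₀) + gauss N (badSet c c' S₁)) +
              gauss N (crossSet c c' S₀ S₁) :=
            add_le_add (measure_union_le _ _) le_rfl
        _ ≤ (ENNReal.ofReal (((S₀.card : ℝ) - 1) * (B / Real.sqrt (2 * π))) +
              ENNReal.ofReal (((S₁.card : ℝ) - 1) * (B / Real.sqrt (2 * π)))) +
              ENNReal.ofReal (B / Real.sqrt (2 * π)) :=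
            add_le_add (add_le_add (ih S₀ hcard₀ hbin₀ hpair₀) (ih S₁ hcard₁ hbin₁ hpair₁))
              hcross
        _ = ENNReal.ofReal ((((S₀.card : ℝ) - 1) * (B / Real.sqrt (2 * π)) +
              ((S₁.card : ℝ) - 1) * (B / Real.sqrt (2 * π))) + (B / Real.sqrt (2 * π))) := by
            have h1le₀ : (1:ℝ) ≤ (S₀.card : ℝ) := by exact_mod_cast hne0.1
            have h1le₁ : (1:ℝ) ≤ (S₁.card : ℝ) := by exact_mod_cast hne0.2
            have hx : 0 ≤ ((S₀.card : ℝ) - 1) * (B / Real.sqrt (2 * π)) :=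
              mul_nonneg (by linarith) hBq
            have hy : 0 ≤ ((S₁.card : ℝ) - 1) * (B / Real.sqrt (2 * π)) :=
              mul_nonneg (by linarith) hBq
            rw [← ENNReal.ofReal_add hx hy, ← ENNReal.ofReal_add (add_nonneg hx hy) hBq]
        _ = ENNReal.ofReal (((S.card : ℝ) - 1) * (B / Real.sqrt (2 * π))) := by
            congr 1
            have hc : (S₀.card : ℝ) + (S₁.card : ℝ) = (S.card : ℝ) := by exact_mod_cast hsplit
            rw [← hc]
            ring

end BadMain
section RateFacts

open Real Set

variable {N K M : ℕ}

lemma config_binary {s : Fin N → ℕ} (hs : s ∈ configs N M) : ∀ i, s i ≤ 1 := by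
  intro i
  have := (Finset.mem_filter.mp hs).1
  rw [Fintype.mem_piFinset] at this
  have := this i
  rw [Finset.mem_range] at this
  omega

lemma config_sum {s : Fin N → ℕ} (hs : s ∈ configs N M) : M ≤ ∑ i, s i :=
  (Finset.mem_filter.mp hs).2

lemma request_sum {x : Fin N → ℕ} (hx : x ∈ requests N K) : ∑ i, x i = K :=
  (Finset.mem_filter.mp hx).2

lemma config_sum_cast {s : Fin N → ℕ} (hs : s ∈ configs N M) (hM : 0 < M) :
    (M : ℝ) ≤ ∑ i, (s i : ℝ) ∧ (0:ℝ) < ∑ i, (s i : ℝ) := by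
  have h1 : ((∑ i, s i : ℕ) : ℝ) = ∑ i, (s i : ℝ) := by push_cast; rfl
  have h2 : (M:ℝ) ≤ ((∑ i, s i : ℕ) : ℝ) := by exact_mod_cast config_sum hs
  constructor
  · rw [← h1]; exact h2
  · rw [← h1]
    have : (0:ℝ) < (M:ℝ) := by exact_mod_cast hM
    linarith

lemma codedRate_nonneg (hM : 0 < M) {s : Fin N → ℕ} (hs : s ∈ configs N M)
    (xi : Fin N → ℕ) : 0 ≤ codedRate M s xi := by
  obtain ⟨hMle, hpos⟩ := config_sum_cast hs hM
  have hM' : (0:ℝ) < M := by exact_mod_cast hM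
  have hu1 : (M:ℝ) / (∑ i, (s i : ℝ)) ≤ 1 := (div_le_one hpos).mpr hMle
  have hu0 : (0:ℝ) ≤ (M:ℝ) / (∑ i, (s i : ℝ)) := by positivity
  have hb0 : (0:ℝ) ≤ 1 - (M:ℝ) / (∑ i, (s i : ℝ)) := by linarith
  have hb1 : 1 - (M:ℝ) / (∑ i, (s i : ℝ)) ≤ 1 := by linarith
  have hp0 : (0:ℝ) ≤ (1 - (M:ℝ) / (∑ i, (s i : ℝ))) ^ (∑ i, xi i * s i) :=
    pow_nonneg hb0 _
  have hp1 : (1 - (M:ℝ) / (∑ i, (s i : ℝ))) ^ (∑ i, xi i * s i) ≤ 1 :=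
    pow_le_one₀ hb0 hb1
  have hf : (0:ℝ) ≤ (∑ i, (s i : ℝ)) / M - 1 := by
    rw [sub_nonneg, le_div_iff₀ hM']
    linarith
  exact mul_nonneg hf (by linarith)

lemma rate_nonneg (hM : 0 < M) {s : Fin N → ℕ} (hs : s ∈ configs N M)
    (xi : Fin N → ℕ) : 0 ≤ rate M s xi := by
  rw [rate]
  refine add_nonneg (Finset.sum_nonneg fun i _ => mul_nonneg ?_ ?_)
    (codedRate_nonneg hM hs xi)
  · have := config_binary hs i
    have : (s i : ℝ) ≤ 1 := by exact_mod_cast this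
    linarith
  · rw [trunc]; positivity

lemma rate_le_K (hM : 0 < M) {s : Fin N → ℕ} (hs : s ∈ configs N M)
    {xi : Fin N → ℕ} (hx : xi ∈ requests N K) : rate M s xi ≤ K := by
  obtain ⟨hMle, hpos⟩ := config_sum_cast hs hM
  have hM' : (0:ℝ) < M := by exact_mod_cast hM
  set u : ℝ := (M:ℝ) / (∑ i, (s i : ℝ)) with hu
  have hu1 : u ≤ 1 := (div_le_one hpos).mpr hMle
  have hu0 : (0:ℝ) ≤ u := by positivity
  set e : ℕ := ∑ i, xi i * s i with he
  -- Bernoulli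
  have hbern : 1 - (e:ℝ) * u ≤ (1 - u) ^ e := by
    have := one_add_mul_le_pow (a := -u) (by linarith) e
    calc 1 - (e:ℝ)*u = 1 + (e:ℝ)*(-u) := by ring
      _ ≤ (1 + -u) ^ e := this
      _ = (1 - u) ^ e := by ring_nf
  have hcoded : codedRate M s xi ≤ (e : ℝ) := by
    rw [codedRate, ← hu, ← he]
    have hf : (0:ℝ) ≤ (∑ i, (s i : ℝ)) / M - 1 := by
      rw [sub_nonneg, le_div_iff₀ hM']; linarith
    calc ((∑ i, (s i : ℝ)) / M - 1) * (1 - (1 - u) ^ e)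
        ≤ ((∑ i, (s i : ℝ)) / M - 1) * ((e:ℝ) * u) := by
          apply mul_le_mul_of_nonneg_left _ hf
          linarith
      _ = (e:ℝ) * (((∑ i, (s i : ℝ)) / M - 1) * u) := by ring
      _ = (e:ℝ) * (1 - u) := by
          congr 1
          rw [hu]
          field_simp
      _ ≤ (e:ℝ) * 1 := by
          apply mul_le_mul_of_nonneg_left _ (Nat.cast_nonneg e)
          linarith
      _ = (e:ℝ) := mul_one _
  have hterm : ∀ i, (1 - (s i : ℝ)) * trunc xi i + (xi i : ℝ) * (s i : ℝ) ≤ (xi i : ℝ) := by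
    intro i
    have hb := config_binary hs i
    rcases Nat.le_one_iff_eq_zero_or_eq_one.mp hb with h | h <;> rw [h]
    · simp only [Nat.cast_zero, mul_zero, sub_zero, one_mul, add_zero, trunc]
      exact_mod_cast min_le_left (xi i) 1
    · simp
  have hesum : (e : ℝ) = ∑ i, (xi i : ℝ) * (s i : ℝ) := by
    rw [he]; push_cast; rfl
  calc rate M s xi ≤ (∑ i, (1 - (s i : ℝ)) * trunc xi i) + (e:ℝ) := by
        rw [rate]; linarith
    _ = ∑ i, ((1 - (s i : ℝ)) * trunc xi i + (xi i : ℝ) * (s i : ℝ)) := by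
        rw [hesum, Finset.sum_add_distrib]
    _ ≤ ∑ i, (xi i : ℝ) := Finset.sum_le_sum fun i _ => hterm i
    _ = (K : ℝ) := by
        rw [← request_sum hx]; push_cast; rfl

lemma configs_nonempty (hMN : M ≤ N) : (fun _ : Fin N => 1) ∈ configs N M := by
  rw [configs, Finset.mem_filter]
  constructor
  · rw [Fintype.mem_piFinset]; intro i; simp
  · simp [hMN]

lemma requests_nonempty (hN : 0 < N) :
    (fun i : Fin N => if i = ⟨0, hN⟩ then K else 0) ∈ requests N K := by
  rw [requests, Finset.mem_filter]
  constructor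
  · rw [Fintype.mem_piFinset]
    intro i
    by_cases h : i = ⟨0, hN⟩ <;> simp [h]
  · simp

lemma rateSet_bdd (hM : 0 < M) :
    BddAbove {r : ℝ | ∃ s ∈ configs N M, ∃ x ∈ requests N K, r = rate M s x} := by
  refine ⟨(K : ℝ), ?_⟩
  rintro r ⟨s, hs, x, hx, rfl⟩
  exact rate_le_K hM hs hx

lemma rate_le_rmax (hM : 0 < M) {s : Fin N → ℕ} (hs : s ∈ configs N M)
    {xi : Fin N → ℕ} (hx : xi ∈ requests N K) : rate M s xi ≤ rmax N K M := by
  rw [rmax]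
  exact le_csSup (rateSet_bdd hM) ⟨s, hs, xi, hx, rfl⟩

lemma rmax_nonneg (hN : 0 < N) (hM : 0 < M) (hMN : M ≤ N) : 0 ≤ rmax N K M :=
  le_trans (rate_nonneg hM (configs_nonempty hMN) _)
    (rate_le_rmax hM (configs_nonempty hMN) (requests_nonempty hN))

lemma rmax_le_K (hN : 0 < N) (hM : 0 < M) (hMN : M ≤ N) : rmax N K M ≤ K := by
  rw [rmax]
  apply csSup_le
  · exact ⟨_, ⟨_, configs_nonempty hMN, _, requests_nonempty hN, rfl⟩⟩
  · rintro r ⟨s, hs, x, hx, rfl⟩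
    exact rate_le_K hM hs hx

end RateFacts
section ObjAlg

open Real Set

variable {N : ℕ}

lemma fcomp_mul (M : ℕ) (hM : 0 < M) (s xi : Fin N → ℕ) :
    ((∑ i, (s i : ℝ)) - M) * fcomp M xi s = codedRate M s xi := by
  have hM' : (M:ℝ) ≠ 0 := Nat.cast_ne_zero.mpr hM.ne'
  rw [fcomp, codedRate]
  field_simp

lemma coded_eq (M : ℕ) (s xi : Fin N → ℕ) :
    codedRate M s xi = rate M s xi - (∑ j, trunc xi j) + ∑ j, (s j : ℝ) * trunc xi j := by
  rw [rate]
  have h : (∑ j, (1 - (s j : ℝ)) * trunc xi j) =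
      (∑ j, trunc xi j) - ∑ j, (s j : ℝ) * trunc xi j := by
    rw [← Finset.sum_sub_distrib]
    exact Finset.sum_congr rfl fun j _ => by ring
  rw [h]; ring

lemma sum_expand (f g h : Fin N → ℝ) (F m η : ℝ) :
    ∑ j, (f j - m) * (F - g j + η * h j) =
      (∑ j, f j) * F - (N:ℝ) * m * F - (∑ j, f j * g j) + m * (∑ j, g j)
        + η * (∑ j, f j * h j) - m * η * (∑ j, h j) := by
  have hterm : ∀ j ∈ Finset.univ, (f j - m) * (F - g j + η * h j)
      = (f j * F + m * g j + η * (f j * h j))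
        - (f j * g j + m * F + m * η * h j) := fun j _ => by ring
  rw [Finset.sum_congr rfl hterm]
  simp only [Finset.sum_sub_distrib, Finset.sum_add_distrib, ← Finset.sum_mul,
    ← Finset.mul_sum, Finset.sum_const, Finset.card_univ, Fintype.card_fin,
    nsmul_eq_mul]
  ring

lemma obj_eq (M : ℕ) (hN : 0 < N) (hM : 0 < M) (x : ℕ → Fin N → ℕ) (η : ℝ) (t : ℕ)
    (γ : Fin N → ℝ) (s : Fin N → ℕ) :
    obj M x η t γ s = (∑ i ∈ Finset.Ico 1 t, rate M s (x i)) + η * lin s γ +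
      ((M:ℝ)/N * ((∑ j, ∑ i ∈ Finset.Ico 1 t, trunc (x i) j) - η * ∑ j, γ j) -
        ∑ j, ∑ i ∈ Finset.Ico 1 t, trunc (x i) j) := by
  have hN' : (N:ℝ) ≠ 0 := Nat.cast_ne_zero.mpr hN.ne'
  have hexp := sum_expand (fun j => (s j : ℝ))
    (fun j => ∑ i ∈ Finset.Ico 1 t, trunc (x i) j) γ
    (∑ i ∈ Finset.Ico 1 t, fcomp M (x i) s) ((M:ℝ)/N) η
  have hobj : obj M x η t γ s =
      (∑ j, (s j : ℝ)) * (∑ i ∈ Finset.Ico 1 t, fcomp M (x i) s)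
      - (N:ℝ) * ((M:ℝ)/N) * (∑ i ∈ Finset.Ico 1 t, fcomp M (x i) s)
      - (∑ j, (s j : ℝ) * (∑ i ∈ Finset.Ico 1 t, trunc (x i) j))
      + (M:ℝ)/N * (∑ j, ∑ i ∈ Finset.Ico 1 t, trunc (x i) j)
      + η * (∑ j, (s j : ℝ) * γ j)
      - (M:ℝ)/N * η * (∑ j, γ j) := by
    rw [obj]; exact hexp
  have hNm : (N:ℝ) * ((M:ℝ)/N) = (M:ℝ) := by field_simp
  have h2 : (∑ j, (s j : ℝ)) * (∑ i ∈ Finset.Ico 1 t, fcomp M (x i) s)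
      - (M:ℝ) * (∑ i ∈ Finset.Ico 1 t, fcomp M (x i) s)
      = ∑ i ∈ Finset.Ico 1 t, codedRate M s (x i) := by
    rw [← sub_mul, Finset.mul_sum]
    exact Finset.sum_congr rfl fun i _ => fcomp_mul M hM s (x i)
  have h3 : ∑ i ∈ Finset.Ico 1 t, codedRate M s (x i)
      = (∑ i ∈ Finset.Ico 1 t, rate M s (x i))
        - (∑ i ∈ Finset.Ico 1 t, ∑ j, trunc (x i) j)
        + ∑ j, (s j : ℝ) * (∑ i ∈ Finset.Ico 1 t, trunc (x i) j) := by
    rw [Finset.sum_congr rfl fun i (_ : i ∈ Finset.Ico 1 t) => coded_eq M s (x i)]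
    rw [Finset.sum_add_distrib, Finset.sum_sub_distrib]
    congr 1
    rw [Finset.sum_comm]
    exact Finset.sum_congr rfl fun j _ => (Finset.mul_sum _ _ _).symm
  have hcomm : (∑ i ∈ Finset.Ico 1 t, ∑ j, trunc (x i) j)
      = ∑ j, ∑ i ∈ Finset.Ico 1 t, trunc (x i) j := Finset.sum_comm
  rw [hobj, hNm, lin]
  linarith [h2, h3, hcomm]

end ObjAlg
section Bridge

open Real Set

variable {N K M : ℕ}

lemma ftpl_zmin (hN : 0 < N) (hM : 0 < M) {α : ℝ} (hα : 0 < α)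
    (x : ℕ → Fin N → ℕ) (σ : ℕ → (Fin N → ℝ) → Fin N → ℕ)
    (hσ : IsFTPL M (fun t => α * Real.sqrt t) x σ) (t : ℕ) (ht : 1 ≤ t) (γ : Fin N → ℝ) :
    zmin (fun s => (∑ i ∈ Finset.Ico 1 t, rate M s (x i)) / (α * Real.sqrt t))
      (configs N M) (σ t γ) γ := by
  intro p hp
  have hobj := hσ.2.2 t γ p hp
  rw [obj_eq M hN hM x _ t γ (σ t γ), obj_eq M hN hM x _ t γ p] at hobj
  have hst : (0:ℝ) < Real.sqrt t := Real.sqrt_pos.mpr (by exact_mod_cast ht)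
  have hη : 0 < α * Real.sqrt t := by positivity
  have h1 : (∑ i ∈ Finset.Ico 1 t, rate M (σ t γ) (x i)) + (α * Real.sqrt t) * lin (σ t γ) γ
      ≤ (∑ i ∈ Finset.Ico 1 t, rate M p (x i)) + (α * Real.sqrt t) * lin p γ := by linarith
  have key : ∀ R L : ℝ, R / (α * Real.sqrt t) + L =
      (R + (α * Real.sqrt t) * L) * (α * Real.sqrt t)⁻¹ := by
    intro R L; field_simp
  rw [key, key]
  exact mul_le_mul_of_nonneg_right h1 (inv_nonneg.mpr hη.le)

lemma sqrt_step (u v : ℝ) (hu : 1 ≤ u) (huv : u ≤ v) (hv2 : v^2 = u^2 + 1) :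
    (u^2 - 1) * (1/u - 1/v) + 1/v ≤ 3/(2*u) := by
  have hu0 : (0:ℝ) < u := by linarith
  have hv0 : (0:ℝ) < v := by linarith
  have hstep : (u^2 - 1) * (1/u - 1/v) + 1/v - 3/(2*u) =
      (2*(u^2-1)*(v-u) + 2*u - 3*v) / (2*u*v) := by
    field_simp
  have hvu : (v - u) * (v + u) = 1 := by nlinarith [hv2]
  have hnum : 2*(u^2-1)*(v-u) + 2*u - 3*v ≤ 0 := by
    nlinarith [mul_le_mul_of_nonneg_left huv hu0.le, hvu, mul_pos hu0 hv0,
      sq_nonneg (v-u), sq_nonneg (u+v)]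
  have hden : (0:ℝ) < 2*u*v := by positivity
  have := (div_le_iff₀ hden).mpr (by linarith :
    2*(u^2-1)*(v-u) + 2*u - 3*v ≤ 0 * (2*u*v))
  linarith [hstep ▸ this]

lemma drift_bound (hN : 0 < N) (hM : 0 < M) (hMN : M ≤ N) {α : ℝ} (hα : 0 < α)
    (x : ℕ → Fin N → ℕ) (hx : ∀ t, x t ∈ requests N K) (t : ℕ) (ht : 1 ≤ t)
    {a b : Fin N → ℕ} (ha : a ∈ configs N M) (hb : b ∈ configs N M) :
    |((∑ i ∈ Finset.Ico 1 (t+1), rate M a (x i)) / (α * Real.sqrt (t+1))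
        - (∑ i ∈ Finset.Ico 1 t, rate M a (x i)) / (α * Real.sqrt t))
      - ((∑ i ∈ Finset.Ico 1 (t+1), rate M b (x i)) / (α * Real.sqrt (t+1))
        - (∑ i ∈ Finset.Ico 1 t, rate M b (x i)) / (α * Real.sqrt t))|
      ≤ 3 / 2 * rmax N K M / (α * Real.sqrt t) := by
  set u : ℝ := Real.sqrt t with hudef
  set v : ℝ := Real.sqrt (t+1) with hvdef
  have htr : (1:ℝ) ≤ (t:ℝ) := by exact_mod_cast ht
  have hu1 : (1:ℝ) ≤ u := Real.one_le_sqrt.mpr htr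
  have hu0 : (0:ℝ) < u := by linarith
  have huv : u ≤ v := Real.sqrt_le_sqrt (by push_cast; linarith)
  have hv0 : (0:ℝ) < v := by linarith
  have hu2 : u^2 = (t:ℝ) := Real.sq_sqrt (by linarith)
  have hv2 : v^2 = u^2 + 1 := by
    rw [hvdef, Real.sq_sqrt (by push_cast; linarith : (0:ℝ) ≤ (t:ℝ)+1), hu2]
  set D : ℝ := (∑ i ∈ Finset.Ico 1 t, rate M a (x i))
      - (∑ i ∈ Finset.Ico 1 t, rate M b (x i)) with hDdef
  set ρ : ℝ := rate M a (x t) - rate M b (x t) with hρdef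
  have hRa : ∑ i ∈ Finset.Ico 1 (t+1), rate M a (x i)
      = (∑ i ∈ Finset.Ico 1 t, rate M a (x i)) + rate M a (x t) :=
    Finset.sum_Ico_succ_top ht _
  have hRb : ∑ i ∈ Finset.Ico 1 (t+1), rate M b (x i)
      = (∑ i ∈ Finset.Ico 1 t, rate M b (x i)) + rate M b (x t) :=
    Finset.sum_Ico_succ_top ht _
  have hrabs : ∀ i, |rate M a (x i) - rate M b (x i)| ≤ rmax N K M := by
    intro i
    have h1 := rate_nonneg hM ha (x i)
    have h2 := rate_nonneg hM hb (x i)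
    have h3 := rate_le_rmax (K := K) hM ha (hx i)
    have h4 := rate_le_rmax (K := K) hM hb (hx i)
    rw [abs_le]; constructor <;> linarith
  have hD : |D| ≤ ((t:ℝ) - 1) * rmax N K M := by
    rw [hDdef, ← Finset.sum_sub_distrib]
    calc |∑ i ∈ Finset.Ico 1 t, (rate M a (x i) - rate M b (x i))|
        ≤ ∑ i ∈ Finset.Ico 1 t, |rate M a (x i) - rate M b (x i)| :=
          Finset.abs_sum_le_sum_abs _ _
      _ ≤ ∑ _i ∈ Finset.Ico 1 t, rmax N K M := Finset.sum_le_sum fun i _ => hrabs i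
      _ = ((t - 1 : ℕ) : ℝ) * rmax N K M := by
          rw [Finset.sum_const, Nat.card_Ico, nsmul_eq_mul]
      _ = ((t:ℝ) - 1) * rmax N K M := by
          congr 1
          push_cast [Nat.cast_sub ht]
          ring
  have hρb : |ρ| ≤ rmax N K M := hrabs t
  have hrm0 : 0 ≤ rmax N K M :=
    le_trans (abs_nonneg _) (hρb)
  -- rewrite the expression
  have hexpr : ((∑ i ∈ Finset.Ico 1 (t+1), rate M a (x i)) / (α * v)
        - (∑ i ∈ Finset.Ico 1 t, rate M a (x i)) / (α * u))
      - ((∑ i ∈ Finset.Ico 1 (t+1), rate M b (x i)) / (α * v)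
        - (∑ i ∈ Finset.Ico 1 t, rate M b (x i)) / (α * u))
      = D * ((α*v)⁻¹ - (α*u)⁻¹) + ρ * (α*v)⁻¹ := by
    rw [hRa, hRb, hDdef, hρdef]
    field_simp
    ring
  have hinvle : (α*v)⁻¹ ≤ (α*u)⁻¹ := by
    apply inv_anti₀ (by positivity)
    have : α * u ≤ α * v := by nlinarith
    linarith
  have hinv0 : (0:ℝ) ≤ (α*v)⁻¹ := by positivity
  have habs : |D * ((α*v)⁻¹ - (α*u)⁻¹) + ρ * (α*v)⁻¹|
      ≤ |D| * ((α*u)⁻¹ - (α*v)⁻¹) + |ρ| * (α*v)⁻¹ := by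
    calc |D * ((α*v)⁻¹ - (α*u)⁻¹) + ρ * (α*v)⁻¹|
        ≤ |D * ((α*v)⁻¹ - (α*u)⁻¹)| + |ρ * (α*v)⁻¹| := abs_add_le _ _
      _ = |D| * ((α*u)⁻¹ - (α*v)⁻¹) + |ρ| * (α*v)⁻¹ := by
          rw [abs_mul, abs_mul, abs_of_nonneg hinv0,
            abs_sub_comm ((α*v)⁻¹) ((α*u)⁻¹),
            abs_of_nonneg (by linarith : (0:ℝ) ≤ (α*u)⁻¹ - (α*v)⁻¹)]
  have hmono : |D| * ((α*u)⁻¹ - (α*v)⁻¹) + |ρ| * (α*v)⁻¹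
      ≤ ((t:ℝ) - 1) * rmax N K M * ((α*u)⁻¹ - (α*v)⁻¹) + rmax N K M * (α*v)⁻¹ := by
    have h1 : (0:ℝ) ≤ (α*u)⁻¹ - (α*v)⁻¹ := by linarith
    have := mul_le_mul_of_nonneg_right hD h1
    have := mul_le_mul_of_nonneg_right hρb hinv0
    linarith
  have hfact : ((t:ℝ) - 1) * rmax N K M * ((α*u)⁻¹ - (α*v)⁻¹) + rmax N K M * (α*v)⁻¹
      = rmax N K M / α * ((u^2 - 1) * (1/u - 1/v) + 1/v) := by
    rw [hu2]
    field_simp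
  have hstep := sqrt_step u v hu1 huv hv2
  have hfin : rmax N K M / α * ((u^2 - 1) * (1/u - 1/v) + 1/v)
      ≤ rmax N K M / α * (3/(2*u)) := by
    apply mul_le_mul_of_nonneg_left hstep (by positivity)
  have hlast : rmax N K M / α * (3/(2*u)) = 3 / 2 * rmax N K M / (α * u) := by
    field_simp
  calc |_| = |D * ((α*v)⁻¹ - (α*u)⁻¹) + ρ * (α*v)⁻¹| := by rw [hexpr]
    _ ≤ |D| * ((α*u)⁻¹ - (α*v)⁻¹) + |ρ| * (α*v)⁻¹ := habs
    _ ≤ ((t:ℝ) - 1) * rmax N K M * ((α*u)⁻¹ - (α*v)⁻¹) + rmax N K M * (α*v)⁻¹ := hmono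
    _ = rmax N K M / α * ((u^2 - 1) * (1/u - 1/v) + 1/v) := hfact
    _ ≤ rmax N K M / α * (3/(2*u)) := hfin
    _ = 3 / 2 * rmax N K M / (α * u) := hlast

end Bridge
section Final

open Real Set

variable {N K M : ℕ}

lemma measSingleton (s : Fin N → ℕ) : MeasurableSet ({s} : Set (Fin N → ℕ)) := by
  have h : ({s} : Set (Fin N → ℕ)) = ⋂ i, (fun g : Fin N → ℕ => g i) ⁻¹' {s i} := by
    ext g
    simp [funext_iff]
  rw [h]
  exact MeasurableSet.iInter fun i => (measurable_pi_apply i) (measurableSet_singleton _)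

lemma meas_eq_event {f g : (Fin N → ℝ) → Fin N → ℕ} (hf : Measurable f)
    (hg : Measurable g) : MeasurableSet {γ | f γ = g γ} := by
  have h : {γ | f γ = g γ} = ⋃ s : Fin N → ℕ, (f ⁻¹' {s} ∩ g ⁻¹' {s}) := by
    ext γ
    simp only [Set.mem_setOf_eq, Set.mem_iUnion, Set.mem_inter_iff, Set.mem_preimage,
      Set.mem_singleton_iff]
    constructor
    · intro h; exact ⟨g γ, h, rfl⟩
    · rintro ⟨s, h1, h2⟩; rw [h1, h2]
  rw [h]
  exact MeasurableSet.iUnion fun s => (hf (measSingleton s)).inter (hg (measSingleton s))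

lemma switch_prob_le (hN : 0 < N) (hM : 0 < M) (hMN : M ≤ N) {α : ℝ} (hα : 0 < α)
    (x : ℕ → Fin N → ℕ) (hx : ∀ t, x t ∈ requests N K)
    (σ : ℕ → (Fin N → ℝ) → Fin N → ℕ)
    (hσ : IsFTPL M (fun t => α * Real.sqrt t) x σ) (t : ℕ) (ht : 1 ≤ t) :
    gauss N {γ | ¬ (σ (t+1) γ = σ t γ)} ≤
      ENNReal.ofReal ((((configs N M).card : ℝ) - 1) *
        ((3 / 2 * rmax N K M / (α * Real.sqrt t)) / Real.sqrt (2 * π))) := by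
  set c : (Fin N → ℕ) → ℝ :=
    fun s => (∑ i ∈ Finset.Ico 1 t, rate M s (x i)) / (α * Real.sqrt t) with hcdef
  set c' : (Fin N → ℕ) → ℝ :=
    fun s => (∑ i ∈ Finset.Ico 1 (t+1), rate M s (x i)) / (α * Real.sqrt (t+1)) with hc'def
  have hsub : {γ | ¬ (σ (t+1) γ = σ t γ)} ⊆ badSet c c' (configs N M) := by
    intro γ hγ
    refine ⟨σ t γ, hσ.2.1 t γ, σ (t+1) γ, hσ.2.1 (t+1) γ, ?_, ?_, ?_⟩
    · exact ftpl_zmin hN hM hα x σ hσ t ht γ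
    · have := ftpl_zmin hN hM hα x σ hσ (t+1) (by omega) γ
      have hcast : ((t+1 : ℕ) : ℝ) = (t:ℝ) + 1 := by push_cast; ring
      rw [hc'def]
      convert this using 3
      rw [hcast]
    · exact fun h => hγ h.symm
  refine le_trans (measure_mono hsub) ?_
  refine le_trans (badSet_measure_le c c' (3 / 2 * rmax N K M / (α * Real.sqrt t))
    (configs N M).card (configs N M) le_rfl (fun s hs => config_binary hs) ?_) ?_
  · intro a ha b hb
    have := drift_bound hN hM hMN hα x hx t ht ha hb
    rw [hcdef, hc'def]
    exact this
  · apply ENNReal.ofReal_le_ofReal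
    rw [mul_div_assoc]

lemma switchCount_eq (σ : ℕ → (Fin N → ℝ) → Fin N → ℕ)
    (hmeas : ∀ t, Measurable (σ t)) (T : ℕ) :
    switchCount σ T =
      ∑ t ∈ Finset.Icc 1 (T-1), (gauss N {γ | ¬ (σ (t+1) γ = σ t γ)}).toReal := by
  haveI : IsProbabilityMeasure (gauss N) := gauss_prob N
  have hind : ∀ t : ℕ, (fun γ => if σ (t+1) γ = σ t γ then (0:ℝ) else 1) =
      Set.indicator {γ | ¬ (σ (t+1) γ = σ t γ)} (fun _ => (1:ℝ)) := by
    intro t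
    funext γ
    by_cases h : σ (t+1) γ = σ t γ <;> simp [h, Set.indicator]
  have hms : ∀ t : ℕ, MeasurableSet {γ : Fin N → ℝ | ¬ (σ (t+1) γ = σ t γ)} := by
    intro t
    have : {γ : Fin N → ℝ | ¬ (σ (t+1) γ = σ t γ)} =
        {γ : Fin N → ℝ | σ (t+1) γ = σ t γ}ᶜ := rfl
    rw [this]
    exact (meas_eq_event (hmeas (t+1)) (hmeas t)).compl
  rw [switchCount, integral_finset_sum]
  · refine Finset.sum_congr rfl fun t _ => ?_
    rw [hind t, MeasureTheory.integral_indicator_const _ (hms t)]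
    simp
    rfl
  · intro t _
    rw [hind t]
    exact (integrable_const (1:ℝ)).indicator (hms t)

lemma sum_inv_sqrt_le : ∀ T : ℕ, ∑ t ∈ Finset.Icc 1 T, 1 / Real.sqrt t ≤ 2 * Real.sqrt T := by
  intro T
  induction T with
  | zero => simp
  | succ T ih =>
    rw [Finset.sum_Icc_succ_top (by omega : 1 ≤ T + 1)]
    set a : ℝ := Real.sqrt T with ha
    set b : ℝ := Real.sqrt ((T:ℕ)+1 : ℕ) with hb
    have hb' : b = Real.sqrt ((T:ℝ)+1) := by rw [hb]; norm_cast
    have ha0 : 0 ≤ a := Real.sqrt_nonneg _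
    have hb0 : (0:ℝ) < b := by rw [hb']; positivity
    have hab : a ≤ b := by rw [ha, hb']; exact Real.sqrt_le_sqrt (by push_cast; linarith)
    have hb2 : b^2 = a^2 + 1 := by
      rw [ha, hb', Real.sq_sqrt (by positivity : (0:ℝ) ≤ (T:ℝ)+1),
        Real.sq_sqrt (Nat.cast_nonneg T)]
    have key : 1 / b ≤ 2 * (b - a) := by
      rw [div_le_iff₀ hb0]
      nlinarith [sq_nonneg (a - b)]
    calc (∑ t ∈ Finset.Icc 1 T, 1 / Real.sqrt t) + 1 / b
        ≤ 2 * a + 2 * (b - a) := by linarith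
      _ = 2 * b := by ring

end Final
section MainBound

open Real Set

variable {N K M : ℕ}

lemma main_bound (hN : 0 < N) (hM : 0 < M) (hMN : M ≤ N) {α : ℝ} (hα : 0 < α)
    (x : ℕ → Fin N → ℕ) (hx : ∀ t, x t ∈ requests N K)
    (σ : ℕ → (Fin N → ℝ) → Fin N → ℕ)
    (hσ : IsFTPL M (fun t => α * Real.sqrt t) x σ) (T : ℕ) :
    switchCount σ T ≤ 3 * rmax N K M * (((configs N M).card : ℝ) - 1)
      / (2 * Real.sqrt (2 * π) * α) * (∑ t ∈ Finset.Icc 1 T, 1 / Real.sqrt t) := by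
  have hrm0 : 0 ≤ rmax N K M := rmax_nonneg hN hM hMN
  have hcard1 : 1 ≤ (configs N M).card := Finset.card_pos.mpr ⟨_, configs_nonempty hMN⟩
  have hcard1' : (1:ℝ) ≤ ((configs N M).card : ℝ) := by exact_mod_cast hcard1
  have hcoef0 : 0 ≤ 3 * rmax N K M * (((configs N M).card : ℝ) - 1)
      / (2 * Real.sqrt (2 * π) * α) := by
    apply div_nonneg _ (by positivity)
    have : (0:ℝ) ≤ ((configs N M).card : ℝ) - 1 := by linarith
    positivity
  rw [switchCount_eq σ hσ.1 T]
  have hterm : ∀ t ∈ Finset.Icc 1 (T-1),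
      (gauss N {γ | ¬ (σ (t+1) γ = σ t γ)}).toReal ≤
        3 * rmax N K M * (((configs N M).card : ℝ) - 1)
          / (2 * Real.sqrt (2 * π) * α) * (1 / Real.sqrt t) := by
    intro t htm
    have ht : 1 ≤ t := (Finset.mem_Icc.mp htm).1
    have hst : (0:ℝ) < Real.sqrt t := Real.sqrt_pos.mpr (by exact_mod_cast ht)
    have hsp : (0:ℝ) < Real.sqrt (2 * π) := by positivity
    have heq : (((configs N M).card : ℝ) - 1) *
        ((3 / 2 * rmax N K M / (α * Real.sqrt t)) / Real.sqrt (2 * π)) =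
        3 * rmax N K M * (((configs N M).card : ℝ) - 1)
          / (2 * Real.sqrt (2 * π) * α) * (1 / Real.sqrt t) := by
      field_simp
    refine ENNReal.toReal_le_of_le_ofReal ?_ ?_
    · rw [← heq]
      have h1 : (0:ℝ) ≤ ((configs N M).card : ℝ) - 1 := by linarith
      positivity
    · rw [← heq]
      exact switch_prob_le hN hM hMN hα x hx σ hσ t ht
  calc ∑ t ∈ Finset.Icc 1 (T-1), (gauss N {γ | ¬ (σ (t+1) γ = σ t γ)}).toReal
      ≤ ∑ t ∈ Finset.Icc 1 (T-1),
          3 * rmax N K M * (((configs N M).card : ℝ) - 1)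
            / (2 * Real.sqrt (2 * π) * α) * (1 / Real.sqrt t) :=
        Finset.sum_le_sum hterm
    _ ≤ ∑ t ∈ Finset.Icc 1 T,
          3 * rmax N K M * (((configs N M).card : ℝ) - 1)
            / (2 * Real.sqrt (2 * π) * α) * (1 / Real.sqrt t) := by
        apply Finset.sum_le_sum_of_subset_of_nonneg
        · exact Finset.Icc_subset_Icc_right (by omega)
        · intro t _ _
          have : (0:ℝ) ≤ 1 / Real.sqrt t := by positivity
          exact mul_nonneg hcoef0 this
    _ = 3 * rmax N K M * (((configs N M).card : ℝ) - 1)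
          / (2 * Real.sqrt (2 * π) * α) * (∑ t ∈ Finset.Icc 1 T, 1 / Real.sqrt t) := by
        rw [Finset.mul_sum]

end MainBound

/-- Theorem 2: the expected number of cache-configuration switches of the FTPL policy
with learning rates `η_t = α√t` up to horizon `T` satisfies
`C(T) ≤ (3·r_max·(|S|−1)/(2√(2π)α))·∑_{t=1}^T 1/√t`; in particular, since `r_max ≤ K`,
`C(T) ≤ (3·K·(|S|−1)/(2√(2π)α))·∑_{t=1}^T 1/√t`, which is `O(√T)`. -/
theorem ftpl_switch_count (N K M : ℕ)
    (hN : 0 < N) (hK : 0 < K) (hM : 0 < M) (hMN : M ≤ N) (α : ℝ) (hα : 0 < α) :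
    (∀ x : ℕ → Fin N → ℕ, (∀ t, x t ∈ requests N K) →
      ∀ σ : ℕ → (Fin N → ℝ) → Fin N → ℕ,
        IsFTPL M (fun t => α * Real.sqrt t) x σ →
      ∀ T : ℕ, 1 ≤ T →
        switchCount σ T ≤
            3 * rmax N K M * (((configs N M).card : ℝ) - 1)
              / (2 * Real.sqrt (2 * Real.pi) * α)
              * (∑ t ∈ Finset.Icc 1 T, 1 / Real.sqrt t)
          ∧ switchCount σ T ≤
              3 * (K : ℝ) * (((configs N M).card : ℝ) - 1)
                / (2 * Real.sqrt (2 * Real.pi) * α)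
                * (∑ t ∈ Finset.Icc 1 T, 1 / Real.sqrt t))
    ∧ ∃ C : ℝ, ∀ x : ℕ → Fin N → ℕ, (∀ t, x t ∈ requests N K) →
        ∀ σ : ℕ → (Fin N → ℝ) → Fin N → ℕ,
          IsFTPL M (fun t => α * Real.sqrt t) x σ →
        ∀ T : ℕ, 1 ≤ T → switchCount σ T ≤ C * Real.sqrt T := by



  have hcard1 : 1 ≤ (configs N M).card := Finset.card_pos.mpr ⟨_, configs_nonempty hMN⟩
  have hcard1' : (1:ℝ) ≤ ((configs N M).card : ℝ) := by exact_mod_cast hcard1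
  have hcm1 : (0:ℝ) ≤ ((configs N M).card : ℝ) - 1 := by linarith
  have hrmK : rmax N K M ≤ K := rmax_le_K hN hM hMN
  have hsum_nonneg : ∀ T : ℕ, (0:ℝ) ≤ ∑ t ∈ Finset.Icc 1 T, 1 / Real.sqrt t := by
    intro T
    apply Finset.sum_nonneg
    intro t _
    positivity
  have hKbound : ∀ x : ℕ → Fin N → ℕ, (∀ t, x t ∈ requests N K) →
      ∀ σ : ℕ → (Fin N → ℝ) → Fin N → ℕ,
        IsFTPL M (fun t => α * Real.sqrt t) x σ → ∀ T : ℕ,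
        switchCount σ T ≤
          3 * (K : ℝ) * (((configs N M).card : ℝ) - 1)
            / (2 * Real.sqrt (2 * Real.pi) * α)
            * (∑ t ∈ Finset.Icc 1 T, 1 / Real.sqrt t) := by
    intro x hx σ hσ T
    refine le_trans (main_bound hN hM hMN hα x hx σ hσ T) ?_
    apply mul_le_mul_of_nonneg_right _ (hsum_nonneg T)
    apply div_le_div_of_nonneg_right _ (by positivity)
    nlinarith [hrmK, hcm1]
  constructor
  · intro x hx σ hσ T _
    exact ⟨main_bound hN hM hMN hα x hx σ hσ T, hKbound x hx σ hσ T⟩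
  · refine ⟨3 * (K : ℝ) * (((configs N M).card : ℝ) - 1)
      / (2 * Real.sqrt (2 * Real.pi) * α) * 2, ?_⟩
    intro x hx σ hσ T _
    have hc0 : (0:ℝ) ≤ 3 * (K : ℝ) * (((configs N M).card : ℝ) - 1)
        / (2 * Real.sqrt (2 * Real.pi) * α) := by
      apply div_nonneg _ (by positivity)
      positivity
    calc switchCount σ T
        ≤ 3 * (K : ℝ) * (((configs N M).card : ℝ) - 1)
            / (2 * Real.sqrt (2 * Real.pi) * α)
            * (∑ t ∈ Finset.Icc 1 T, 1 / Real.sqrt t) := hKbound x hx σ hσ T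
      _ ≤ 3 * (K : ℝ) * (((configs N M).card : ℝ) - 1)
            / (2 * Real.sqrt (2 * Real.pi) * α) * (2 * Real.sqrt T) :=
          mul_le_mul_of_nonneg_left (sum_inv_sqrt_le T) hc0
      _ = 3 * (K : ℝ) * (((configs N M).card : ℝ) - 1)
            / (2 * Real.sqrt (2 * Real.pi) * α) * 2 * Real.sqrt T := by ring

end CodedCaching
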